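/- For any finite digraph D, cn(D) = cn(D⃖), where D⃖ is the reverse digraph of D obtained by reversing the direction of every arc. -/
import Mathlib


open scoped Classical

/-- The out-neighborhood of a set `S` in the digraph with arc relation `A`. -/
noncomputable def Nplus {V : Type} [Fintype V] (A : V → V → Prop) (S : Finset V) : Finset V :=
  Finset.univ.filter (fun y => ∃ x ∈ S, A x y)

/-- The robber territories associated with a cop strategy `W` (0-indexed:
`terr A W i` is the paper's `R_{i+1}`). -/
noncomputable def terr {V : Type} [Fintype V] [DecidableEq V]
    (A : V → V → Prop) (W : ℕ → Finset V) : ℕ → Finset V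
  | 0 => Finset.univ \ W 0
  | i + 1 => Nplus A (terr A W i) \ W (i + 1)

/-- A cop strategy uses at most `k` cops. -/
def UsesAtMost {V : Type} (W : ℕ → Finset V) (k : ℕ) : Prop :=
  ∀ i, (W i).card ≤ k

/-- The cop number: the least `k` admitting a winning strategy using `k` cops. -/
noncomputable def copNumber {V : Type} [Fintype V] [DecidableEq V] (A : V → V → Prop) : ℕ :=
  sInf {k | ∃ W : ℕ → Finset V, UsesAtMost W k ∧ ∃ t, terr A W t = ∅}

/-- Walk characterization of membership in the robber territory. -/
lemma mem_terr_iff {V : Type} [Fintype V] [DecidableEq V]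
    (A : V → V → Prop) (W : ℕ → Finset V) (t : ℕ) (v : V) :
    v ∈ terr A W t ↔
      ∃ x : ℕ → V, x t = v ∧ (∀ i < t, A (x i) (x (i + 1))) ∧ (∀ i ≤ t, x i ∉ W i) := by
  induction t generalizing v with
  | zero =>
    simp only [terr, Finset.mem_sdiff, Finset.mem_univ, true_and]
    constructor
    · intro hv
      refine ⟨fun _ => v, rfl, fun i hi => absurd hi (Nat.not_lt_zero i), fun i hi => ?_⟩
      have : i = 0 := Nat.le_zero.mp hi
      simpa [this] using hv
    · rintro ⟨x, rfl, -, h⟩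
      exact h 0 le_rfl
  | succ t ih =>
    simp only [terr, Finset.mem_sdiff, Nplus, Finset.mem_filter, Finset.mem_univ, true_and]
    constructor
    · rintro ⟨⟨u, hu, hA⟩, hv⟩
      obtain ⟨x, hxt, harc, havoid⟩ := (ih u).mp hu
      refine ⟨fun i => if i ≤ t then x i else v, by simp, ?_, ?_⟩
      · intro i hi
        rcases Nat.lt_succ_iff_lt_or_eq.mp hi with h | h
        · simpa [Nat.le_of_lt h, Nat.succ_le_of_lt h] using harc i h
        · subst h
          simpa [hxt] using hA
      · intro i hi
        rcases Nat.le_succ_iff.mp hi with h | h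
        · rcases Nat.lt_succ_iff_lt_or_eq.mp (Nat.lt_succ_of_le h) with _ | _
          all_goals simpa [h] using havoid i h
        · simp only [h]
          simp [hv]
    · rintro ⟨x, hxt, harc, havoid⟩
      refine ⟨⟨x t, (ih (x t)).mpr ⟨x, rfl, fun i hi => harc i (Nat.lt_succ_of_lt hi),
        fun i hi => havoid i (Nat.le_succ_of_le hi)⟩, ?_⟩, ?_⟩
      · simpa [hxt] using harc t (Nat.lt_succ_self t)
      · simpa [hxt] using havoid (t + 1) le_rfl

/-- Reversing a winning strategy in time wins on the reverse digraph. -/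
lemma terr_reverse_empty {V : Type} [Fintype V] [DecidableEq V]
    (A : V → V → Prop) (W : ℕ → Finset V) (t : ℕ) (h : terr A W t = ∅) :
    terr (fun u w => A w u) (fun i => W (t - i)) t = ∅ := by
  by_contra hne
  obtain ⟨v, hv⟩ := Finset.nonempty_iff_ne_empty.mpr hne
  obtain ⟨y, hyt, harc, havoid⟩ := (mem_terr_iff _ _ t v).mp hv
  have : y 0 ∈ terr A W t := by
    refine (mem_terr_iff A W t (y 0)).mpr ⟨fun i => y (t - i), by simp, ?_, ?_⟩
    · intro i hi
      have h1 : t - i = (t - (i + 1)) + 1 := by omega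
      have := harc (t - (i + 1)) (by omega)
      show A (y (t - i)) (y (t - (i + 1)))
      rw [h1]
      simpa [Nat.sub_add_cancel (Nat.succ_le_of_lt hi)] using this
    · intro i hi
      have h1 : t - (t - i) = i := by omega
      have := havoid (t - i) (Nat.sub_le t i)
      simpa [h1] using this
  rw [h] at this
  exact absurd this (Finset.notMem_empty _)

lemma copNumber_set_subset {V : Type} [Fintype V] [DecidableEq V] (A : V → V → Prop) :
    {k | ∃ W : ℕ → Finset V, UsesAtMost W k ∧ ∃ t, terr A W t = ∅} ⊆
    {k | ∃ W : ℕ → Finset V, UsesAtMost W k ∧ ∃ t, terr (fun u w => A w u) W t = ∅} := by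
  rintro k ⟨W, hW, t, ht⟩
  exact ⟨fun i => W (t - i), fun i => hW _, t, terr_reverse_empty A W t ht⟩

/-- A digraph and its reverse digraph have the same cop number. -/
theorem copNumber_reverse {V : Type} [Fintype V] [DecidableEq V] (A : V → V → Prop) :
    copNumber A = copNumber (fun u w => A w u) := by
  unfold copNumber
  congr 1
  apply Set.Subset.antisymm
  · exact copNumber_set_subset A
  · exact copNumber_set_subset (fun u w => A w u)
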